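/- arXiv:2306.16679 — 6 statements merged into one kernel-verified Lean document; each statement's English description precedes it below -/
import Mathlib

section
/- Let d ∈ ℕ with d ≥ 1. For each n ∈ ℕ let A_n be a unital C*-algebra with a faithful state φ_n, and let A_∞ be a unital C*-algebra with a faithful state φ_∞. For each n ∈ ℕ ∪ {∞} let X^(n) = (X_1^(n), …, X_d^(n)) be a d-tuple of elements of the corresponding algebra. Assume: (a) uniform RD property: there exist constants C > 0 and D > 0 such that for every n ∈ ℕ and every *-polynomial P in d variables, ‖P(X^(n))‖ ≤ C·(deg P + 1)^D·(φ_n(P(X^(n))* · P(X^(n))))^{1/2}; (b) convergence in non-commutative *-distribution: for every *-polynomial P in d variables, φ_n(P(X^(n))) → φ_∞(P(X^(∞))) as n → ∞. Then the tuples converge strongly: for every *-polynomial P in d variables, ‖P(X^(n))‖ → ‖P(X^(∞))‖ as n → ∞. -/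
open Filter ComplexOrder

/-- A state on a unital C*-algebra: a linear functional which is unital and positive. -/
def IsState {A : Type*} [CStarAlgebra A] (φ : A →ₗ[ℂ] ℂ) : Prop :=
  φ 1 = 1 ∧ ∀ x : A, 0 ≤ φ (star x * x)

/-- A state is faithful if `φ (x* x) = 0` implies `x = 0`. -/
def IsFaithful {A : Type*} [CStarAlgebra A] (φ : A →ₗ[ℂ] ℂ) : Prop :=
  ∀ x : A, φ (star x * x) = 0 → x = 0

/-- Evaluation of a word in the letters `X_1,…,X_d, X_1*,…,X_d*` (the Boolean flag
indicates a starred letter) at a `d`-tuple of elements of a C*-algebra. -/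
def evalWord {d : ℕ} {A : Type*} [Ring A] [StarRing A] (x : Fin d → A)
    (w : List (Fin d × Bool)) : A :=
  (w.map fun p => if p.2 then star (x p.1) else x p.1).prod

/-- A *-polynomial in `d` variables is a finitely supported ℂ-linear combination of words;
this is its evaluation at a `d`-tuple. -/
noncomputable def evalPoly {d : ℕ} {A : Type*} [Ring A] [StarRing A] [Algebra ℂ A]
    (P : List (Fin d × Bool) →₀ ℂ) (x : Fin d → A) : A :=
  P.sum fun w c => c • evalWord x w

/-- The degree of a *-polynomial: the maximal length of a word with nonzero coefficient. -/
def degPoly {d : ℕ} (P : List (Fin d × Bool) →₀ ℂ) : ℕ :=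
  P.support.sup List.length

section Poly

set_option linter.unusedSectionVars false

variable {d : ℕ} {A : Type*} [Ring A] [StarRing A] [Algebra ℂ A] [StarModule ℂ A]

noncomputable def evalHom (x : Fin d → A) :
    MonoidAlgebra ℂ (FreeMonoid (Fin d × Bool)) →ₐ[ℂ] A :=
  MonoidAlgebra.lift ℂ A (FreeMonoid (Fin d × Bool))
    (FreeMonoid.lift fun p => if p.2 then star (x p.1) else x p.1)

lemma evalWord_eq (x : Fin d → A) (w : List (Fin d × Bool)) :
    evalWord x w
      = FreeMonoid.lift (fun p => if p.2 then star (x p.1) else x p.1)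
          (FreeMonoid.ofList w) := by
  induction w with
  | nil => simpa [evalWord] using (map_one
      (FreeMonoid.lift (fun p : Fin d × Bool => if p.2 then star (x p.1) else x p.1))).symm
  | cons a w ih =>
      rw [evalWord, List.map_cons, List.prod_cons,
        show FreeMonoid.ofList (a :: w) = FreeMonoid.of a * FreeMonoid.ofList w from rfl,
        map_mul, FreeMonoid.lift_eval_of]
      exact congrArg _ ih

lemma evalPoly_eq (x : Fin d → A) (P : MonoidAlgebra ℂ (FreeMonoid (Fin d × Bool))) :
    evalPoly P.coeff x = evalHom x P := by
  rw [evalHom, MonoidAlgebra.lift_apply]; unfold evalPoly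
  exact Finsupp.sum_congr fun w _ => by rw [evalWord_eq]; rfl

def starW (w : List (Fin d × Bool)) : List (Fin d × Bool) :=
  (w.map fun p => (p.1, !p.2)).reverse

noncomputable def starP (P : List (Fin d × Bool) →₀ ℂ) : List (Fin d × Bool) →₀ ℂ :=
  Finsupp.mapDomain starW (P.mapRange (starRingEnd ℂ) (map_zero _))

lemma length_starW (w : List (Fin d × Bool)) : (starW w).length = w.length := by
  simp [starW]

lemma evalWord_append (x : Fin d → A) (u v : List (Fin d × Bool)) :
    evalWord x (u ++ v) = evalWord x u * evalWord x v := by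
  simp [evalWord]

lemma evalWord_starW (x : Fin d → A) (w : List (Fin d × Bool)) :
    evalWord x (starW w) = star (evalWord x w) := by
  induction w with
  | nil => simp [starW, evalWord]
  | cons a w ih =>
      rw [show starW (a :: w) = starW w ++ [(a.1, !a.2)] by simp [starW],
        evalWord_append, ih, show evalWord x (a :: w)
          = (if a.2 then star (x a.1) else x a.1) * evalWord x w from by
            simp [evalWord]]
      rw [star_mul]
      congr 1
      cases h : a.2 <;> simp [evalWord]

lemma evalPoly_starP (x : Fin d → A) (P : List (Fin d × Bool) →₀ ℂ) :
    evalPoly (starP P) x = star (evalPoly P x) := by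
  rw [evalPoly, starP, Finsupp.sum_mapDomain_index (by simp) (by
    intro w c₁ c₂; rw [add_smul]), Finsupp.sum_mapRange_index (by simp)]
  rw [evalPoly, Finsupp.sum, Finsupp.sum, star_sum]
  refine Finset.sum_congr rfl fun w _ => ?_
  rw [evalWord_starW, star_smul]
  rfl

lemma degPoly_starP (P : List (Fin d × Bool) →₀ ℂ) : degPoly (starP P) ≤ degPoly P := by
  refine Finset.sup_le fun w hw => ?_
  have := Finsupp.mapDomain_support hw
  simp only [Finset.mem_image] at this
  obtain ⟨v, hv, rfl⟩ := this
  have hv' : v ∈ P.support := Finsupp.support_mapRange hv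
  rw [length_starW]
  exact Finset.le_sup hv'

lemma degPoly_mul (P Q : MonoidAlgebra ℂ (FreeMonoid (Fin d × Bool))) :
    degPoly (P * Q).coeff ≤ degPoly P.coeff + degPoly Q.coeff := by
  haveI : DecidableEq (FreeMonoid (Fin d × Bool)) :=
    inferInstanceAs (DecidableEq (List (Fin d × Bool)))
  refine Finset.sup_le fun w hw => ?_
  have := MonoidAlgebra.support_coeff_mul_subset P Q hw
  replace this := Finset.mem_mul.mp this
  obtain ⟨y, hy, z, hz, rfl⟩ := this
  have : (y * z : FreeMonoid (Fin d × Bool)).length = y.length + z.length :=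
    List.length_append (as := y) (bs := z)
  rw [show List.length (y * z : FreeMonoid (Fin d × Bool))
    = List.length (y : List (Fin d × Bool)) + List.length (z : List (Fin d × Bool)) from this]
  exact add_le_add (Finset.le_sup hy) (Finset.le_sup hz)

lemma degPoly_pow (P : MonoidAlgebra ℂ (FreeMonoid (Fin d × Bool))) (k : ℕ) :
    degPoly (P ^ k).coeff ≤ k * degPoly P.coeff := by
  induction k with
  | zero =>
      simp only [pow_zero, zero_mul, Nat.le_zero, degPoly]
      refine Nat.le_zero.mp (Finset.sup_le fun w hw => ?_)
      have : w = (1 : FreeMonoid (Fin d × Bool)) := by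
        have := MonoidAlgebra.support_coeff_one_subset (k := ℂ) (G := FreeMonoid (Fin d × Bool)) hw
        exact (Finset.mem_one (α := FreeMonoid (Fin d × Bool))).mp this
      simp [this]
      rfl
  | succ k ih =>
      calc degPoly (P ^ (k+1)).coeff = degPoly (P ^ k * P).coeff := by rw [pow_succ]
        _ ≤ degPoly (P ^ k).coeff + degPoly P.coeff := degPoly_mul _ _
        _ ≤ k * degPoly P.coeff + degPoly P.coeff := by omega
        _ = (k+1) * degPoly P.coeff := by ring

/-- Identity reinterpretation of a *-polynomial as an element of the monoid algebra over
the free monoid. -/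
def toMA {d : ℕ} (P : List (Fin d × Bool) →₀ ℂ) :
    MonoidAlgebra ℂ (FreeMonoid (Fin d × Bool)) := .ofCoeff P

lemma degPoly_toMA {d : ℕ} (P : List (Fin d × Bool) →₀ ℂ) : degPoly (toMA P).coeff = degPoly P := rfl

noncomputable def QP {d : ℕ} (P : List (Fin d × Bool) →₀ ℂ) :
    MonoidAlgebra ℂ (FreeMonoid (Fin d × Bool)) :=
  toMA (starP P) * toMA P

lemma evalPoly_QP_pow (x : Fin d → A) (P : List (Fin d × Bool) →₀ ℂ) (k : ℕ) :
    evalPoly ((QP P ^ k : MonoidAlgebra ℂ (FreeMonoid (Fin d × Bool)))).coeff x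
      = (star (evalPoly P x) * evalPoly P x) ^ k := by
  rw [evalPoly_eq, map_pow, QP, map_mul]
  rw [show evalHom x (toMA (starP P)) = star (evalPoly P x) from by
        rw [← evalPoly_starP (x := x) (P := P)]; exact (evalPoly_eq x (toMA (starP P))).symm,
      show evalHom x (toMA P) = evalPoly P x from (evalPoly_eq x (toMA P)).symm]

lemma degPoly_QP_pow (P : List (Fin d × Bool) →₀ ℂ) (k : ℕ) :
    degPoly (QP P ^ k).coeff ≤ 2 * k * degPoly P := by
  refine (degPoly_pow (QP P) k).trans ?_
  have h1 : degPoly (QP P).coeff ≤ 2 * degPoly P := by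
    rw [QP]
    refine (degPoly_mul _ _).trans ?_
    rw [degPoly_toMA, degPoly_toMA]
    have := degPoly_starP (d := d) P
    omega
  calc k * degPoly (QP P).coeff ≤ k * (2 * degPoly P) := Nat.mul_le_mul_left _ h1
    _ = 2 * k * degPoly P := by ring


end Poly

section State

variable {A : Type*} [CStarAlgebra A] [PartialOrder A] [StarOrderedRing A]
  {φ : A →ₗ[ℂ] ℂ} (hφ : IsState φ)

include hφ

lemma state_nonneg {a : A} (ha : 0 ≤ a) : 0 ≤ φ a := by
  rw [StarOrderedRing.nonneg_iff] at ha
  induction ha using AddSubmonoid.closure_induction with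
  | mem x hx => obtain ⟨s, rfl⟩ := hx; exact hφ.2 s
  | zero => simp
  | add x y _ _ hx hy => rw [map_add]; exact add_nonneg hx hy

lemma state_re_nonneg {a : A} (ha : 0 ≤ a) : 0 ≤ (φ a).re := by
  have := state_nonneg hφ ha
  rw [Complex.le_def] at this
  simpa using this.1

lemma state_mono {a b : A} (hab : a ≤ b) : (φ a).re ≤ (φ b).re := by
  have := state_re_nonneg hφ (sub_nonneg.mpr hab)
  rw [map_sub] at this
  simp only [Complex.sub_re] at this
  linarith

lemma state_algebraMap (r : ℝ) : φ (algebraMap ℝ A r) = (r : ℂ) := by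
  rw [Algebra.algebraMap_eq_smul_one, LinearMap.map_smul_of_tower, hφ.1]
  simp [Complex.real_smul]

lemma state_re_le_norm {a : A} (ha : 0 ≤ a) : (φ a).re ≤ ‖a‖ := by
  have h1 : a ≤ algebraMap ℝ A ‖a‖ := IsSelfAdjoint.le_algebraMap_norm_self (.of_nonneg ha)
  have := state_mono hφ h1
  rwa [state_algebraMap hφ, Complex.ofReal_re] at this

lemma state_pos_of_ne_zero (hφf : IsFaithful φ) {b : A} (hb : IsSelfAdjoint b) (hb0 : b ≠ 0) :
    0 < (φ (b * b)).re := by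
  have h1 : 0 ≤ φ (b * b) := by simpa [hb.star_eq] using hφ.2 b
  have h2 : φ (b * b) ≠ 0 := fun h => hb0 (hφf b (by rwa [hb.star_eq]))
  rw [Complex.le_def] at h1
  rcases h1 with ⟨h1r, h1i⟩
  simp only [Complex.zero_re, Complex.zero_im] at h1r h1i
  refine lt_of_le_of_ne h1r fun h => h2 ?_
  exact Complex.ext (by simp [← h]) (by simp [← h1i])

omit hφ in
lemma norm_pow_of_nonneg [Nontrivial A] {c : A} (hc : 0 ≤ c) {k : ℕ} (hk : 0 < k) :
    ‖c ^ k‖ = ‖c‖ ^ k := by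
  refine le_antisymm (norm_pow_le' c hk) ?_
  have hsa : IsSelfAdjoint c := .of_nonneg hc
  have h1 : ‖c‖ ∈ spectrum ℝ c := CStarAlgebra.norm_mem_spectrum_of_nonneg hc
  have h2 : ‖c‖ ^ k ∈ spectrum ℝ (c ^ k) := by
    rw [← cfc_pow_id (R := ℝ) c k hsa, cfc_map_spectrum (R := ℝ) (fun x => x ^ k) c]
    exact ⟨‖c‖, h1, rfl⟩
  have := spectrum.norm_le_norm_of_mem h2
  rwa [Real.norm_eq_abs, abs_of_nonneg (by positivity)] at this

lemma state_lower_aux (hφf : IsFaithful φ) {a : A} (ha : 0 ≤ a)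
    {θ : ℝ} (hθ0 : 0 ≤ θ) (hθ : θ < ‖a‖) :
    ∃ c : ℝ, 0 < c ∧ ∀ k : ℕ, c * θ ^ k ≤ (φ (a ^ k)).re := by
  have hnt : Nontrivial A := by
    refine nontrivial_of_ne 1 0 fun h => ?_
    have := hφ.1
    rw [h, map_zero] at this
    exact one_ne_zero this.symm
  set t := ‖a‖ with ht
  have htθ : 0 < t - θ := by linarith
  set g : ℝ → ℝ := fun s => max 0 (min 1 ((s - θ) / (t - θ))) with hg
  have hgc : Continuous g := by
    apply Continuous.max continuous_const
    exact Continuous.min continuous_const ((continuous_id.sub continuous_const).div_const _)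
  have hgt : g t = 1 := by
    simp only [hg, div_self htθ.ne', min_self]
    norm_num
  have hg01 : ∀ s, 0 ≤ g s ∧ g s ≤ 1 := fun s =>
    ⟨le_max_left _ _, max_le (by norm_num) (min_le_left _ _)⟩
  have hgzero : ∀ s, s < θ → g s = 0 := by
    intro s hs
    have : (s - θ) / (t - θ) ≤ 0 := div_nonpos_iff.mpr (Or.inr ⟨by linarith, htθ.le⟩)
    simp only [hg]
    rw [max_eq_left]
    exact (min_le_right _ _).trans this
  set b : A := cfc g a with hb
  have hsa : IsSelfAdjoint a := .of_nonneg ha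
  have hb_sa : IsSelfAdjoint b := cfc_predicate g a
  have hb0 : b ≠ 0 := by
    intro h
    have hmem : g t ∈ spectrum ℝ b := by
      rw [hb, cfc_map_spectrum (R := ℝ) g a hsa hgc.continuousOn]
      exact ⟨t, CStarAlgebra.norm_mem_spectrum_of_nonneg ha, rfl⟩
    rw [h, spectrum.zero_eq, hgt] at hmem
    simp at hmem
  refine ⟨(φ (b * b)).re, state_pos_of_ne_zero hφ hφf hb_sa hb0, fun k => ?_⟩
  have hineq : θ ^ k • (b * b) ≤ a ^ k := by
    have e1 : b * b = cfc (fun s => g s * g s) a :=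
      (cfc_mul g g a hgc.continuousOn hgc.continuousOn).symm
    have e2 : θ ^ k • cfc (fun s => g s * g s) a
        = cfc (fun s => θ ^ k • (g s * g s)) a :=
      (cfc_smul (θ ^ k) (fun s => g s * g s) a ((hgc.mul hgc).continuousOn)).symm
    rw [e1, e2, ← cfc_pow_id (R := ℝ) a k hsa]
    refine cfc_mono (fun s hs => ?_)
      (((hgc.mul hgc).const_smul (θ ^ k)).continuousOn) ((continuous_pow k).continuousOn)
    have hs0 : 0 ≤ s := spectrum_nonneg_of_nonneg ha hs
    by_cases hsθ : θ ≤ s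
    · have h1 : g s * g s ≤ 1 :=
        mul_le_one₀ (hg01 s).2 (hg01 s).1 (hg01 s).2
      calc θ ^ k • (g s * g s) ≤ θ ^ k * 1 := by
            simpa [smul_eq_mul] using mul_le_mul_of_nonneg_left h1 (pow_nonneg hθ0 k)
        _ = θ ^ k := by ring
        _ ≤ s ^ k := pow_le_pow_left₀ hθ0 hsθ k
    · rw [hgzero s (not_le.mp hsθ)]
      simpa using pow_nonneg hs0 k
  have := state_mono hφ hineq
  rw [LinearMap.map_smul_of_tower, Complex.smul_re, smul_eq_mul] at this
  linarith

end State

/-- Uniform RD property together with convergence in non-commutative *-distribution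
implies strong convergence. -/
theorem strong_convergence_of_uniformRD
    (d : ℕ) (hd : 1 ≤ d)
    (A : ℕ → Type*) [∀ n, CStarAlgebra (A n)]
    (B : Type*) [CStarAlgebra B]
    (φ : ∀ n, A n →ₗ[ℂ] ℂ) (ψ : B →ₗ[ℂ] ℂ)
    (hφ : ∀ n, IsState (φ n)) (hφf : ∀ n, IsFaithful (φ n))
    (hψ : IsState ψ) (hψf : IsFaithful ψ)
    (X : ∀ n, Fin d → A n) (Y : Fin d → B)
    (hRD : ∃ C D : ℝ, 0 < C ∧ 0 < D ∧ ∀ n : ℕ, ∀ P : List (Fin d × Bool) →₀ ℂ,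
      ‖evalPoly P (X n)‖ ≤
        C * ((degPoly P : ℝ) + 1) ^ D *
          Real.sqrt ((φ n (star (evalPoly P (X n)) * evalPoly P (X n))).re))
    (hconv : ∀ P : List (Fin d × Bool) →₀ ℂ,
      Tendsto (fun n => φ n (evalPoly P (X n))) atTop (nhds (ψ (evalPoly P Y)))) :
    ∀ P : List (Fin d × Bool) →₀ ℂ,
      Tendsto (fun n => ‖evalPoly P (X n)‖) atTop (nhds ‖evalPoly P Y‖) := by
  obtain ⟨C, D, hC, hD, hRD⟩ := hRD
  intro P
  classical
  letI : PartialOrder B := CStarAlgebra.spectralOrder B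
  haveI : StarOrderedRing B := CStarAlgebra.spectralOrderedRing B
  letI : ∀ n, PartialOrder (A n) := fun n => CStarAlgebra.spectralOrder (A n)
  haveI : ∀ n, StarOrderedRing (A n) := fun n => CStarAlgebra.spectralOrderedRing (A n)
  haveI hAnt : ∀ n, Nontrivial (A n) := fun n => nontrivial_of_ne 1 0 (fun h => by
    have := (hφ n).1
    rw [h, map_zero] at this
    exact one_ne_zero this.symm)
  have hu : ∀ k : ℕ, Tendsto (fun n => (φ n (evalPoly (QP P ^ k).coeff (X n))).re) atTop
      (nhds ((ψ ((star (evalPoly P Y) * evalPoly P Y) ^ k)).re)) := by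
    intro k
    have h := (Complex.continuous_re.tendsto _).comp (hconv (QP P ^ k).coeff)
    rwa [evalPoly_QP_pow] at h
  have fact1 : ∀ (k : ℕ), 0 < k → ∀ n, (φ n (evalPoly (QP P ^ k).coeff (X n))).re
      ≤ ‖evalPoly P (X n)‖ ^ (2 * k) := by
    intro k hk n
    rw [evalPoly_QP_pow]
    have hc : (0 : A n) ≤ star (evalPoly P (X n)) * evalPoly P (X n) := star_mul_self_nonneg _
    calc (φ n ((star (evalPoly P (X n)) * evalPoly P (X n)) ^ k)).re
        ≤ ‖(star (evalPoly P (X n)) * evalPoly P (X n)) ^ k‖ :=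
          state_re_le_norm (hφ n) (CStarAlgebra.pow_nonneg hc k)
      _ ≤ ‖star (evalPoly P (X n)) * evalPoly P (X n)‖ ^ k := norm_pow_le' _ hk
      _ = (‖evalPoly P (X n)‖ * ‖evalPoly P (X n)‖) ^ k := by
          rw [CStarRing.norm_star_mul_self]
      _ = ‖evalPoly P (X n)‖ ^ (2 * k) := by rw [← sq, ← pow_mul]
  have fact2 : ∀ (k : ℕ), 0 < k → ∀ n, ‖evalPoly P (X n)‖ ^ (2 * k)
      ≤ C * ((2 * k * degPoly P : ℕ) + 1 : ℝ) ^ D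
        * Real.sqrt ((φ n (evalPoly (QP P ^ (2 * k)).coeff (X n))).re) := by
    intro k hk n
    have h1 := hRD n (QP P ^ k).coeff
    have hsa : IsSelfAdjoint (star (evalPoly P (X n)) * evalPoly P (X n)) :=
      IsSelfAdjoint.star_mul_self _
    have e1 : ‖evalPoly (QP P ^ k).coeff (X n)‖ = ‖evalPoly P (X n)‖ ^ (2 * k) := by
      rw [evalPoly_QP_pow, norm_pow_of_nonneg (star_mul_self_nonneg _) hk,
        CStarRing.norm_star_mul_self, ← sq, ← pow_mul]
    have e2 : star (evalPoly (QP P ^ k).coeff (X n)) * evalPoly (QP P ^ k).coeff (X n)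
        = evalPoly (QP P ^ (2 * k)).coeff (X n) := by
      rw [evalPoly_QP_pow, evalPoly_QP_pow, (hsa.pow k).star_eq, ← pow_add, two_mul]
    rw [e1, e2] at h1
    refine h1.trans ?_
    refine mul_le_mul_of_nonneg_right ?_ (Real.sqrt_nonneg _)
    refine mul_le_mul_of_nonneg_left ?_ hC.le
    refine Real.rpow_le_rpow (by positivity) ?_ hD.le
    have h3 : (degPoly (QP P ^ k).coeff : ℝ) ≤ ((2 * k * degPoly P : ℕ) : ℝ) :=
      Nat.cast_le.mpr (degPoly_QP_pow P k)
    linarith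
  have fact3 : ∀ (k : ℕ), 0 < k →
      (ψ ((star (evalPoly P Y) * evalPoly P Y) ^ k)).re ≤ ‖evalPoly P Y‖ ^ (2 * k) := by
    intro k hk
    have hc : (0 : B) ≤ star (evalPoly P Y) * evalPoly P Y := star_mul_self_nonneg _
    calc (ψ ((star (evalPoly P Y) * evalPoly P Y) ^ k)).re
        ≤ ‖(star (evalPoly P Y) * evalPoly P Y) ^ k‖ :=
          state_re_le_norm hψ (CStarAlgebra.pow_nonneg hc k)
      _ ≤ ‖star (evalPoly P Y) * evalPoly P Y‖ ^ k := norm_pow_le' _ hk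
      _ = ‖evalPoly P Y‖ ^ (2 * k) := by
          rw [CStarRing.norm_star_mul_self, ← sq, ← pow_mul]
  refine tendsto_order.mpr ⟨?_, ?_⟩
  · -- lower bound
    intro l hl
    rcases lt_or_ge l 0 with hl0 | hl0
    · exact Eventually.of_forall fun n => lt_of_lt_of_le hl0 (norm_nonneg _)
    · set M := ‖evalPoly P Y‖ with hM
      have hM0 : 0 < M := lt_of_le_of_lt hl0 hl
      have ha : (0 : B) ≤ star (evalPoly P Y) * evalPoly P Y := star_mul_self_nonneg _
      have hna : ‖star (evalPoly P Y) * evalPoly P Y‖ = M ^ 2 := by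
        rw [CStarRing.norm_star_mul_self, sq, hM]
      set θ := (l ^ 2 + M ^ 2) / 2 with hθdef
      have hθl : l ^ 2 < θ := by nlinarith
      have hθ0 : 0 < θ := lt_of_le_of_lt (sq_nonneg l) hθl
      have hθt : θ < ‖star (evalPoly P Y) * evalPoly P Y‖ := by rw [hna]; nlinarith
      obtain ⟨c, hc0, hck⟩ := state_lower_aux hψ hψf ha hθ0.le hθt
      have htend : Tendsto (fun k : ℕ => (l ^ 2 / θ) ^ k) atTop (nhds 0) :=
        tendsto_pow_atTop_nhds_zero_of_lt_one (by positivity) ((div_lt_one hθ0).mpr hθl)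
      obtain ⟨k, hkc, hk1⟩ :=
        ((htend.eventually (eventually_lt_nhds hc0)).and (eventually_ge_atTop 1)).exists
      have hklt : l ^ (2 * k) < c * θ ^ k := by
        have h2 : (l ^ 2 / θ) ^ k * θ ^ k < c * θ ^ k :=
          mul_lt_mul_of_pos_right hkc (pow_pos hθ0 k)
        calc l ^ (2 * k) = (l ^ 2) ^ k := by rw [pow_mul]
          _ = (l ^ 2 / θ) ^ k * θ ^ k := by
              rw [div_pow, div_mul_cancel₀]
              exact (pow_pos hθ0 k).ne'
          _ < c * θ ^ k := h2
      have hev : ∀ᶠ n in atTop,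
          l ^ (2 * k) < (φ n (evalPoly (QP P ^ k).coeff (X n))).re :=
        (hu k).eventually (eventually_gt_nhds (lt_of_lt_of_le hklt (hck k)))
      filter_upwards [hev] with n hn
      exact lt_of_pow_lt_pow_left₀ (2 * k) (norm_nonneg _) (lt_of_lt_of_le hn (fact1 k hk1 n))
  · -- upper bound
    intro r hr
    set M := ‖evalPoly P Y‖ with hM
    have hM0 : (0 : ℝ) ≤ M := norm_nonneg _
    have hr0 : 0 < r := lt_of_le_of_lt hM0 hr
    set m := (M + r) / 2 with hmdef
    have hMm : M < m := by rw [hmdef]; linarith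
    have hmr : m < r := by rw [hmdef]; linarith
    have hm0 : 0 < m := by rw [hmdef]; linarith
    have hq1 : m / r < 1 := (div_lt_one hr0).mpr hmr
    have hq0 : 0 < m / r := div_pos hm0 hr0
    have hlog : Real.log (m / r) < 0 := Real.log_neg hq0 hq1
    set β := -Real.log (m / r) with hβ
    have hβ0 : 0 < β := neg_pos.mpr hlog
    have hgt : Tendsto (fun x : ℝ => x ^ D * Real.exp (-β * x)) atTop (nhds 0) :=
      tendsto_rpow_mul_exp_neg_mul_atTop_nhds_zero D β hβ0
    have hgn : Tendsto
        (fun k : ℕ => C * (2 * (degPoly P : ℝ) + 2) ^ D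
          * ((k : ℝ) ^ D * Real.exp (-β * k))) atTop (nhds 0) := by
      have := (hgt.comp tendsto_natCast_atTop_atTop).const_mul
        (C * (2 * (degPoly P : ℝ) + 2) ^ D)
      simpa using this
    have hkey : ∀ᶠ k : ℕ in atTop,
        C * ((2 * k * degPoly P : ℕ) + 1 : ℝ) ^ D * (m / r) ^ (2 * k) < 1 := by
      have h1 : ∀ᶠ k : ℕ in atTop,
          C * (2 * (degPoly P : ℝ) + 2) ^ D * ((k : ℝ) ^ D * Real.exp (-β * k)) < 1 :=
        hgn.eventually (eventually_lt_nhds one_pos)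
      filter_upwards [h1, eventually_ge_atTop 1] with k hk hk1
      refine lt_of_le_of_lt ?_ hk
      have hkr : (1 : ℝ) ≤ (k : ℝ) := by exact_mod_cast hk1
      have e1 : ((2 * k * degPoly P : ℕ) + 1 : ℝ) ≤ (2 * (degPoly P : ℝ) + 2) * (k : ℝ) := by
        push_cast
        nlinarith [Nat.cast_nonneg (α := ℝ) (degPoly P)]
      have e2 : ((m / r) : ℝ) ^ (2 * k) ≤ Real.exp (-β * k) := by
        have e3 : ((m / r) : ℝ) ^ (2 * k) = Real.exp ((2 * k : ℕ) * Real.log (m / r)) := by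
          rw [← Real.exp_log hq0, ← Real.exp_nat_mul, Real.exp_log hq0]
        rw [e3]
        refine Real.exp_le_exp.mpr ?_
        rw [hβ, neg_neg]
        push_cast
        nlinarith [hlog, hkr]
      calc C * ((2 * k * degPoly P : ℕ) + 1 : ℝ) ^ D * (m / r) ^ (2 * k)
          ≤ C * ((2 * (degPoly P : ℝ) + 2) * (k : ℝ)) ^ D * Real.exp (-β * k) := by
            refine mul_le_mul (mul_le_mul_of_nonneg_left ?_ hC.le) e2
              (by positivity) (by positivity)
            exact Real.rpow_le_rpow (by positivity) e1 hD.le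
        _ = C * (2 * (degPoly P : ℝ) + 2) ^ D * ((k : ℝ) ^ D * Real.exp (-β * k)) := by
            rw [Real.mul_rpow (by positivity) (by positivity)]
            ring
    obtain ⟨k, hfk, hk1⟩ := (hkey.and (eventually_ge_atTop 1)).exists
    have h4k : (ψ ((star (evalPoly P Y) * evalPoly P Y) ^ (2 * k))).re < m ^ (2 * (2 * k)) := by
      refine lt_of_le_of_lt (fact3 (2 * k) (by omega)) ?_
      exact pow_lt_pow_left₀ hMm hM0 (by omega)
    have hev := (hu (2 * k)).eventually (eventually_lt_nhds h4k)
    filter_upwards [hev] with n hn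
    have h2 := fact2 k hk1 n
    have hsle : Real.sqrt ((φ n (evalPoly (QP P ^ (2 * k)).coeff (X n))).re) ≤ m ^ (2 * k) := by
      have h3 := Real.sqrt_le_sqrt hn.le
      rwa [show m ^ (2 * (2 * k)) = (m ^ (2 * k)) ^ 2 by rw [← pow_mul]; ring_nf,
        Real.sqrt_sq (by positivity)] at h3
    have h5 : ‖evalPoly P (X n)‖ ^ (2 * k) ≤ C * ((2 * k * degPoly P : ℕ) + 1 : ℝ) ^ D
        * m ^ (2 * k) :=
      h2.trans (mul_le_mul_of_nonneg_left hsle (by positivity))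
    have h6 : C * ((2 * k * degPoly P : ℕ) + 1 : ℝ) ^ D * m ^ (2 * k) < r ^ (2 * k) := by
      have hrk : (0 : ℝ) < r ^ (2 * k) := pow_pos hr0 _
      have h7 := mul_lt_mul_of_pos_right hfk hrk
      rw [one_mul] at h7
      calc C * ((2 * k * degPoly P : ℕ) + 1 : ℝ) ^ D * m ^ (2 * k)
          = C * ((2 * k * degPoly P : ℕ) + 1 : ℝ) ^ D * ((m / r) ^ (2 * k) * r ^ (2 * k)) := by
            rw [← mul_pow, div_mul_cancel₀ _ hr0.ne']
        _ = C * ((2 * k * degPoly P : ℕ) + 1 : ℝ) ^ D * (m / r) ^ (2 * k) * r ^ (2 * k) := by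
            ring
        _ < r ^ (2 * k) := h7
    exact lt_of_pow_lt_pow_left₀ (2 * k) hr0.le (lt_of_le_of_lt h5 h6)
end

section
/- For each n ∈ ℕ let A_n be a unital C*-algebra and a_n ∈ A_n a self-adjoint element; let A be a unital C*-algebra and a ∈ A a self-adjoint element. Assume that for every polynomial p with real coefficients, ‖p(a_n)‖ → ‖p(a)‖ as n → ∞ (where p(a_n) denotes the evaluation of p at a_n via the polynomial functional calculus). Then hausdorffDist(σ(a_n), σ(a)) → 0 as n → ∞, where σ denotes the spectrum viewed as a compact subset of ℝ. -/
open Filter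
open Polynomial Metric

lemma my_norm_aeval_le {A : Type*} [CStarAlgebra A] {a : A} (ha : IsSelfAdjoint a)
    (p : ℝ[X]) {c : ℝ} (hc : 0 ≤ c) (h : ∀ x ∈ spectrum ℝ a, |p.eval x| ≤ c) :
    ‖(aeval a p : A)‖ ≤ c := by
  rw [← cfc_polynomial p a ha]
  exact norm_cfc_le hc (by simpa using h)

lemma my_le_norm_aeval {A : Type*} [CStarAlgebra A] {a : A} (ha : IsSelfAdjoint a)
    (p : ℝ[X]) {x : ℝ} (hx : x ∈ spectrum ℝ a) :
    |p.eval x| ≤ ‖(aeval a p : A)‖ := by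
  rw [← cfc_polynomial p a ha]
  simpa using norm_apply_le_norm_cfc p.eval a hx (by fun_prop) ha

lemma my_spec_abs_le {A : Type*} [CStarAlgebra A] {a : A} {x : ℝ}
    (hx : x ∈ spectrum ℝ a) : |x| ≤ ‖a‖ := by
  rcases subsingleton_or_nontrivial A with hA | hA
  · exact absurd hx (by simp [spectrum.mem_iff, isUnit_of_subsingleton])
  · simpa using spectrum.norm_le_norm_of_mem hx

/-- If the norms of real-polynomial evaluations at self-adjoint elements `a n` converge to
those at `a`, then the spectra (as compact subsets of ℝ) converge in Hausdorff distance. -/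
theorem spectra_hausdorff_convergence_of_polynomial_norm_convergence
    (A : ℕ → Type*) [∀ n, CStarAlgebra (A n)]
    (B : Type*) [CStarAlgebra B]
    (a : ∀ n, A n) (b : B)
    (ha : ∀ n, IsSelfAdjoint (a n)) (hb : IsSelfAdjoint b)
    (h : ∀ p : Polynomial ℝ,
      Tendsto (fun n => ‖(Polynomial.aeval (a n) p : A n)‖) atTop
        (nhds ‖(Polynomial.aeval b p : B)‖)) :
    Tendsto (fun n => Metric.hausdorffDist (spectrum ℝ (a n)) (spectrum ℝ b)) atTop
      (nhds 0) := by
  rcases subsingleton_or_nontrivial B with hB | hB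
  · have hσ : spectrum ℝ b = ∅ :=
      Set.eq_empty_of_forall_notMem fun x hx => by
        simp [spectrum.mem_iff, isUnit_of_subsingleton] at hx
    simpa [hσ, Metric.hausdorffDist_empty'] using tendsto_const_nhds (α := ℝ) (f := atTop (α := ℕ))
  rw [NormedAddCommGroup.tendsto_nhds_zero]
  intro ε hε
  set M : ℝ := ‖b‖ + 1 with hM
  have hM0 : 0 < M := by positivity
  have hbK : spectrum ℝ b ⊆ Set.Icc (-M) M := by
    intro x hx
    have := my_spec_abs_le hx
    rw [abs_le] at this
    exact ⟨by simp only [hM]; linarith [this.1], by simp only [hM]; linarith [this.2]⟩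
  have hcpt : IsCompact (spectrum ℝ b) := spectrum.isCompact b
  have hne : (spectrum ℝ b).Nonempty := hb.spectrum_nonempty
  -- eventual norm bound
  have hX := h Polynomial.X
  simp only [Polynomial.aeval_X] at hX
  have EA : ∀ᶠ n in atTop, ‖a n‖ < M := hX.eventually_lt_const (by simp [hM])
  -- polynomial approximating the distance function
  obtain ⟨p, hp⟩ := exists_polynomial_near_of_continuousOn (-M) M
    (fun x => Metric.infDist x (spectrum ℝ b))
    ((Metric.continuous_infDist_pt _).continuousOn) (ε/8) (by linarith)
  have hpb : ‖(aeval b p : B)‖ ≤ ε/8 := by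
    apply my_norm_aeval_le hb p (by linarith)
    intro x hx
    have h1 := hp x (hbK hx)
    rw [Metric.infDist_zero_of_mem hx, sub_zero] at h1
    linarith [h1]
  have EB : ∀ᶠ n in atTop, ‖(aeval (a n) p : A n)‖ < ε/4 :=
    (h p).eventually_lt_const (by linarith)
  -- finite cover of the spectrum of b
  have hcover : spectrum ℝ b ⊆ ⋃ y : spectrum ℝ b, Metric.ball (y : ℝ) (ε/4) := by
    intro z hz
    exact Set.mem_iUnion.2 ⟨⟨z, hz⟩, Metric.mem_ball_self (by linarith)⟩
  obtain ⟨t, ht⟩ := hcpt.elim_finite_subcover _ (fun y => Metric.isOpen_ball) hcover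
  -- bump polynomials
  have key : ∀ y : spectrum ℝ b, ∃ q : ℝ[X],
      ∀ x ∈ Set.Icc (-M) M, |q.eval x - max 0 (1 - dist x (y : ℝ) / (ε/4))| < 1/4 := by
    intro y
    exact exists_polynomial_near_of_continuousOn (-M) M _
      (by fun_prop) (1/4) (by norm_num)
  choose q hq using key
  have hqb : ∀ y : spectrum ℝ b, (3:ℝ)/4 ≤ ‖(aeval b (q y) : B)‖ := by
    intro y
    have h1 := hq y (y : ℝ) (hbK y.2)
    have h2 : max 0 (1 - dist (y : ℝ) (y : ℝ) / (ε/4)) = 1 := by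
      simp
    rw [h2] at h1
    have h3 : (3:ℝ)/4 ≤ |(q y).eval (y : ℝ)| := by
      have := abs_lt.mp h1
      have := le_abs_self ((q y).eval (y : ℝ))
      linarith [this]
    linarith [my_le_norm_aeval hb (q y) y.2]
  have EC : ∀ᶠ n in atTop, ∀ y ∈ t, (1:ℝ)/2 < ‖(aeval (a n) (q y) : A n)‖ := by
    rw [eventually_all_finset]
    intro y _
    exact (h (q y)).eventually_const_lt (lt_of_lt_of_le (by norm_num) (hqb y))
  filter_upwards [EA, EB, EC] with n hA1 hB1 hC1
  set s := spectrum ℝ (a n) with hs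
  have hsK : s ⊆ Set.Icc (-M) M := by
    intro x hx
    have := my_spec_abs_le hx
    rw [abs_le] at this
    exact ⟨by linarith [this.1], by linarith [this.2]⟩
  have claim1 : ∀ x ∈ s, ∃ y ∈ spectrum ℝ b, dist x y ≤ ε/2 := by
    intro x hx
    have h3 : |p.eval x| ≤ ‖(aeval (a n) p : A n)‖ := my_le_norm_aeval (ha n) p hx
    have h4 := hp x (hsK hx)
    have h5 : Metric.infDist x (spectrum ℝ b) < ε/2 := by
      have := abs_lt.mp h4
      have := abs_le.mp (le_of_lt (lt_of_le_of_lt h3 hB1))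
      linarith [this.1, this.2]
    obtain ⟨y, hy, hyd⟩ := hcpt.exists_infDist_eq_dist hne x
    exact ⟨y, hy, by rw [← hyd]; linarith⟩
  have claim2 : ∀ z ∈ spectrum ℝ b, ∃ x ∈ s, dist z x ≤ ε/2 := by
    intro z hz
    obtain ⟨y, hyt, hzy⟩ := Set.mem_iUnion₂.mp (ht hz)
    have hq' := hC1 y hyt
    have hx : ∃ x ∈ s, 1/2 < |(q y).eval x| := by
      by_contra hcon
      push_neg at hcon
      have := my_norm_aeval_le (ha n) (q y) (by norm_num) hcon
      linarith
    obtain ⟨x, hxs, hxq⟩ := hx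
    have h6 := hq y x (hsK hxs)
    have h6' := abs_lt.mp h6
    have hg0 : (0:ℝ) ≤ 0 ⊔ (1 - dist x (y:ℝ) / (ε/4)) := le_max_left _ _
    have h7 : (1:ℝ)/4 < 0 ⊔ (1 - dist x (y:ℝ) / (ε/4)) := by
      rcases lt_abs.mp hxq with hv | hv
      · linarith [h6'.1, h6'.2]
      · linarith [h6'.1, h6'.2]
    have h8 : (1:ℝ)/4 < 1 - dist x (y:ℝ) / (ε/4) := by
      rcases lt_max_iff.mp h7 with h | h
      · norm_num at h
      · exact h
    have h9 : dist x (y:ℝ) < ε/4 := by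
      have hε4 : (0:ℝ) < ε/4 := by linarith
      have h8' : dist x (y:ℝ) / (ε/4) < 3/4 := by linarith
      rw [div_lt_iff₀ hε4] at h8'
      linarith
    refine ⟨x, hxs, ?_⟩
    calc dist z x ≤ dist z (y:ℝ) + dist (y:ℝ) x := dist_triangle _ _ _
      _ ≤ ε/4 + ε/4 := by
          rw [dist_comm (y:ℝ) x]
          exact add_le_add (le_of_lt (Metric.mem_ball.mp hzy)) (le_of_lt h9)
      _ = ε/2 := by ring
  have hdist := Metric.hausdorffDist_le_of_mem_dist (by linarith) claim1 claim2
  rw [Real.norm_eq_abs, abs_of_nonneg Metric.hausdorffDist_nonneg]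
  linarith
end

section
/- For each n ∈ ℕ let A_n be a unital C*-algebra and a_n ∈ A_n a self-adjoint element; let A be a unital C*-algebra and a ∈ A a self-adjoint element. Assume that for every polynomial p with real coefficients, ‖p(a_n)‖ → ‖p(a)‖ as n → ∞. Then for every ε > 0 there exists N such that for all n ≥ N, for every x ∈ σ(a) there exists y ∈ σ(a_n) with |x − y| < ε; i.e., eventually σ(a) is contained in the open ε-neighborhood of σ(a_n). -/
open Filter

/-- If the norms of real-polynomial evaluations at self-adjoint elements `a n` converge to
those at `a`, then eventually the spectrum of `a` is contained in the open ε-neighborhood of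
the spectrum of `a n`. -/
theorem spectrum_eventually_lower_approx
    (A : ℕ → Type*) [∀ n, CStarAlgebra (A n)]
    (B : Type*) [CStarAlgebra B]
    (a : ∀ n, A n) (b : B)
    (ha : ∀ n, IsSelfAdjoint (a n)) (hb : IsSelfAdjoint b)
    (h : ∀ p : Polynomial ℝ,
      Tendsto (fun n => ‖(Polynomial.aeval (a n) p : A n)‖) atTop
        (nhds ‖(Polynomial.aeval b p : B)‖)) :
    ∀ ε : ℝ, 0 < ε → ∃ N : ℕ, ∀ n ≥ N,
      ∀ x ∈ spectrum ℝ b, ∃ y ∈ spectrum ℝ (a n), |x - y| < ε := by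
  intro ε hε
  set M : ℝ := ‖b‖ with hM
  -- eventually ‖a n‖ ≤ M + 1
  have hX : Tendsto (fun n => ‖a n‖) atTop (nhds ‖b‖) := by
    simpa using h Polynomial.X
  have hbound : ∀ᶠ n in atTop, ‖a n‖ ≤ M + 1 :=
    hX.eventually_le_const (by linarith [norm_nonneg b])
  -- spectra are contained in [-(M+1), M+1] (eventually for a n, always for b)
  have hspec_b : ∀ t ∈ spectrum ℝ b, |t| ≤ M := by
    intro t ht
    have := norm_apply_le_norm_cfc (id : ℝ → ℝ) b ht
    simpa [cfc_id ℝ b] using this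
  have hspec_a : ∀ n, ∀ y ∈ spectrum ℝ (a n), |y| ≤ ‖a n‖ := by
    intro n y hy
    have := norm_apply_le_norm_cfc (id : ℝ → ℝ) (a n) hy
    simpa [cfc_id ℝ (a n)] using this
  -- compactness of the spectrum of b, finite subcover by ε/2-balls
  have hK : IsCompact (spectrum ℝ b) := spectrum.isCompact b
  obtain ⟨T, hTmem, hTcov⟩ := hK.elim_nhds_subcover (fun t => Metric.ball t (ε / 2))
    (fun t _ => Metric.ball_mem_nhds t (by linarith))
  -- for each center t, eventually the spectrum of `a n` meets `ball t (ε/2)`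
  have key : ∀ t ∈ T, ∀ᶠ n in atTop, ∃ y ∈ spectrum ℝ (a n), |t - y| < ε / 2 := by
    intro t htT
    have htK : t ∈ spectrum ℝ b := hTmem t htT
    -- bump function
    set f : ℝ → ℝ := fun x => max 0 (1 - (2 / ε) * |x - t|) with hf
    have hfc : Continuous f := by fun_prop
    have hft : f t = 1 := by simp [hf]
    have hf0 : ∀ x, ε / 2 ≤ |x - t| → f x = 0 := by
      intro x hx
      have h2 : (1 : ℝ) ≤ (2 / ε) * |x - t| := by
        rw [div_mul_eq_mul_div, le_div_iff₀ hε]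
        nlinarith
      simp only [hf, max_eq_left_iff]
      linarith
    have hf01 : ∀ x, 0 ≤ f x := fun x => le_max_left _ _
    -- Weierstrass approximation on [-(M+1), M+1]
    obtain ⟨q, hq⟩ := exists_polynomial_near_of_continuousOn (-(M + 1)) (M + 1) f
      hfc.continuousOn (1 / 4) (by norm_num)
    have htIcc : t ∈ Set.Icc (-(M + 1)) (M + 1) := by
      have := hspec_b t htK
      rw [abs_le] at this
      constructor <;> linarith [this.1, this.2]
    -- ‖aeval b q‖ ≥ 3/4
    have hlow : (3 / 4 : ℝ) ≤ ‖(Polynomial.aeval b q : B)‖ := by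
      have h1 := norm_apply_le_norm_cfc q.eval b htK
      rw [cfc_polynomial q b] at h1
      have h2 := hq t htIcc
      rw [hft] at h2
      have : (3/4 : ℝ) ≤ |q.eval t| := by
        rw [abs_sub_lt_iff] at h2
        have := le_abs_self (q.eval t)
        linarith [h2.2]
      calc (3/4 : ℝ) ≤ |q.eval t| := this
        _ = ‖q.eval t‖ := (Real.norm_eq_abs _).symm
        _ ≤ _ := h1
    -- eventually ‖aeval (a n) q‖ > 1/2
    have hev : ∀ᶠ n in atTop, (1 / 2 : ℝ) < ‖(Polynomial.aeval (a n) q : A n)‖ :=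
      (h q).eventually_const_lt (by linarith)
    filter_upwards [hev, hbound] with n hn hbn
    by_contra hcon
    push_neg at hcon
    have : ‖(Polynomial.aeval (a n) q : A n)‖ ≤ 1 / 2 := by
      rw [← cfc_polynomial q (a n)]
      refine norm_cfc_le (by norm_num) fun y hy => ?_
      have hyIcc : y ∈ Set.Icc (-(M + 1)) (M + 1) := by
        have h1 := (hspec_a n y hy).trans hbn
        rw [abs_le] at h1
        exact ⟨h1.1, h1.2⟩
      have hfy : f y = 0 := by
        apply hf0
        have := hcon y hy
        rw [abs_sub_comm] at this
        linarith
      have := hq y hyIcc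
      rw [hfy, sub_zero] at this
      rw [Real.norm_eq_abs]
      linarith
    linarith
  -- combine the finitely many eventual statements
  have hall : ∀ᶠ n in atTop, ∀ t ∈ T, ∃ y ∈ spectrum ℝ (a n), |t - y| < ε / 2 :=
    (T.eventually_all).mpr key
  obtain ⟨N, hN⟩ := eventually_atTop.mp hall
  refine ⟨N, fun n hn x hx => ?_⟩
  obtain ⟨t, htT, hxt⟩ := Set.mem_iUnion₂.mp (hTcov hx)
  obtain ⟨y, hy, hty⟩ := hN n hn t htT
  refine ⟨y, hy, ?_⟩
  rw [Metric.mem_ball, Real.dist_eq] at hxt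
  calc |x - y| ≤ |x - t| + |t - y| := abs_sub_le x t y
    _ < ε / 2 + ε / 2 := by gcongr
    _ = ε := by ring
end

section
/- For each n ∈ ℕ let A_n be a unital C*-algebra and a_n ∈ A_n a self-adjoint element; let A be a unital C*-algebra and a ∈ A a self-adjoint element. Assume that for every polynomial p with real coefficients, ‖p(a_n)‖ → ‖p(a)‖ as n → ∞. Then for every ε > 0 there exists N such that for all n ≥ N, every y ∈ σ(a_n) satisfies dist(y, σ(a)) < ε; i.e., eventually σ(a_n) is contained in the open ε-neighborhood of σ(a). -/
open Filter

lemma nontrivial_of_mem_spectrum {R A : Type*} [CommSemiring R] [Ring A] [Algebra R A]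
    {x : A} {y : R} (hy : y ∈ spectrum R x) : Nontrivial A := by
  by_contra h'
  rw [not_nontrivial_iff_subsingleton] at h'
  exact (spectrum.mem_iff.mp hy) (isUnit_of_subsingleton _)

/-- If the norms of real-polynomial evaluations at self-adjoint elements `a n` converge to
those at `a`, then eventually the spectrum of `a n` is contained in the open ε-neighborhood
of the spectrum of `a`. -/
theorem spectrum_eventually_upper_approx
    (A : ℕ → Type*) [∀ n, CStarAlgebra (A n)]
    (B : Type*) [CStarAlgebra B]
    (a : ∀ n, A n) (b : B)
    (ha : ∀ n, IsSelfAdjoint (a n)) (hb : IsSelfAdjoint b)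
    (h : ∀ p : Polynomial ℝ,
      Tendsto (fun n => ‖(Polynomial.aeval (a n) p : A n)‖) atTop
        (nhds ‖(Polynomial.aeval b p : B)‖)) :
    ∀ ε : ℝ, 0 < ε → ∃ N : ℕ, ∀ n ≥ N,
      ∀ y ∈ spectrum ℝ (a n), Metric.infDist y (spectrum ℝ b) < ε := by
  intro ε hε
  set K := spectrum ℝ b with hK
  rcases K.eq_empty_or_nonempty with hKe | hKne
  · exact ⟨0, fun n _ y _ => by rw [hKe, Metric.infDist_empty]; exact hε⟩
  obtain ⟨x₀, hx₀⟩ := hKne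
  haveI : Nontrivial B := nontrivial_of_mem_spectrum hx₀
  set M : ℝ := ‖b‖ + 1 with hM
  -- the test function
  set f : ℝ → ℝ := fun x => min (Metric.infDist x K) (ε / 2) with hf
  have hfc : Continuous f := (Metric.continuous_infDist_pt K).min continuous_const
  -- Weierstrass approximation
  obtain ⟨q, hq⟩ := exists_polynomial_near_of_continuousOn (-M) M f
    hfc.continuousOn (ε / 8) (by linarith)
  -- bound ‖q(b)‖
  have hbq : ‖(Polynomial.aeval b q : B)‖ ≤ ε / 8 := by
    rw [← cfc_polynomial q b]
    refine norm_cfc_le (by linarith) fun x hx => ?_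
    have hx0 : f x = 0 := by
      have : Metric.infDist x K = 0 := by
        rw [← Metric.mem_closure_iff_infDist_zero ⟨x, hx⟩]
        exact subset_closure hx
      simp [hf, this, le_of_lt (by linarith : (0:ℝ) < ε / 2)]
    have hxI : x ∈ Set.Icc (-M) M := by
      have h1 := spectrum.norm_le_norm_of_mem hx
      rw [Real.norm_eq_abs] at h1
      have h2 := abs_le.mp (h1.trans (show ‖b‖ ≤ M by rw [hM]; linarith))
      exact ⟨h2.1, h2.2⟩
    have := hq x hxI
    rw [hx0, sub_zero] at this
    simpa [Real.norm_eq_abs] using this.le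
  -- eventually ‖q(aₙ)‖ < ε/4
  have h1 : ∀ᶠ n in atTop, ‖(Polynomial.aeval (a n) q : A n)‖ < ε / 4 :=
    (h q).eventually (gt_mem_nhds (by linarith))
  -- eventually ‖aₙ‖ < M
  have h2 : ∀ᶠ n in atTop, ‖a n‖ < M := by
    have hX := h Polynomial.X
    simp only [Polynomial.aeval_X] at hX
    exact hX.eventually (gt_mem_nhds (by rw [hM]; linarith))
  obtain ⟨N, hN⟩ := (h1.and h2).exists_forall_of_atTop
  refine ⟨N, fun n hn y hy => ?_⟩
  haveI : Nontrivial (A n) := nontrivial_of_mem_spectrum hy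
  obtain ⟨hq1, hq2⟩ := hN n hn
  -- y ∈ [-M, M]
  have hyI : y ∈ Set.Icc (-M) M := by
    have h3 := spectrum.norm_le_norm_of_mem hy
    rw [Real.norm_eq_abs] at h3
    have h4 := abs_le.mp (h3.trans hq2.le)
    exact ⟨h4.1, h4.2⟩
  -- |q(y)| ≤ ‖q(aₙ)‖
  have hqy : |Polynomial.eval y q| < ε / 4 := by
    have h5 := norm_apply_le_norm_cfc (Polynomial.eval · q) (a n) hy
    rw [cfc_polynomial q (a n)] at h5
    calc |Polynomial.eval y q| ≤ ‖(Polynomial.aeval (a n) q : A n)‖ := by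
          simpa [Real.norm_eq_abs] using h5
      _ < ε / 4 := hq1
  -- conclude
  have hfy : f y < ε / 2 := by
    have h3 := hq y hyI
    rw [abs_sub_comm] at h3
    calc f y = (f y - Polynomial.eval y q) + Polynomial.eval y q := by ring
      _ ≤ |f y - Polynomial.eval y q| + |Polynomial.eval y q| :=
          add_le_add (le_abs_self _) (le_abs_self _)
      _ < ε / 8 + ε / 4 := add_lt_add h3 hqy
      _ < ε / 2 := by linarith
  have : Metric.infDist y K < ε / 2 := by
    by_contra hc
    push_neg at hc
    rw [hf] at hfy
    simp only [min_lt_iff] at hfy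
    rcases hfy with h' | h'
    · linarith
    · linarith
  linarith
end

section
/- Let A be a unital C*-algebra and φ : A → ℂ a faithful state. Then for every x ∈ A, the sequence n ↦ (φ((x* x)^n))^{1/(2n)} converges to ‖x‖ as n → ∞. (Here φ((x* x)^n) is a nonnegative real number since (x* x)^n is positive.) -/
open Filter ComplexOrder

/-- For a faithful state `φ` on a unital C*-algebra, the `L^{2n}`-norms
`(φ((x* x)^n))^{1/(2n)}` converge to the operator norm `‖x‖`. -/
theorem Lp_norms_tendsto_norm
    (A : Type*) [CStarAlgebra A]
    (φ : A →ₗ[ℂ] ℂ) (hφ : IsState φ)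
    (hfaithful : ∀ x : A, φ (star x * x) = 0 → x = 0)
    (x : A) :
    Tendsto (fun n : ℕ => (φ ((star x * x) ^ n)).re ^ ((1 : ℝ) / (2 * n))) atTop
      (nhds ‖x‖) := by
  letI : PartialOrder A := CStarAlgebra.spectralOrder A
  haveI : StarOrderedRing A := CStarAlgebra.spectralOrderedRing A
  obtain ⟨hφ1, hφpos⟩ := hφ
  -- positivity of φ on nonnegative elements
  have hpos : ∀ c : A, 0 ≤ c → 0 ≤ φ c := by
    intro c hc
    have h1 : star (CFC.sqrt c) * CFC.sqrt c = c := by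
      rw [(IsSelfAdjoint.of_nonneg (CFC.sqrt_nonneg _)).star_eq, CFC.sqrt_mul_sqrt_self c hc]
    rw [← h1]; exact hφpos _
  have hmono : ∀ b c : A, b ≤ c → (φ b).re ≤ (φ c).re := by
    intro b c hbc
    have h := (Complex.le_def.mp (hpos _ (sub_nonneg.mpr hbc))).1
    rw [map_sub] at h
    simpa using h
  set a := star x * x with ha_def
  have ha : 0 ≤ a := star_mul_self_nonneg x
  have hsa : IsSelfAdjoint a := .of_nonneg ha
  have hre_nonneg : ∀ n : ℕ, 0 ≤ (φ (a ^ n)).re := fun n =>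
    (Complex.le_def.mp (hpos _ (CStarAlgebra.pow_nonneg ha n))).1
  have hsmul : ∀ (r : ℝ) (y : A), φ (r • y) = (r : ℂ) * φ y := by
    intro r y
    rw [← smul_one_smul ℂ r y, map_smul, smul_eq_mul, Complex.real_smul, mul_one]
  have hφ_alg : ∀ r : ℝ, φ (algebraMap ℝ A r) = (r : ℂ) := by
    intro r
    rw [Algebra.algebraMap_eq_smul_one, hsmul, hφ1, mul_one]
  have hnorm : ‖a‖ = ‖x‖ ^ 2 := by
    rw [ha_def, CStarRing.norm_star_mul_self, sq]
  -- upper bound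
  have hupper : ∀ n : ℕ, 1 ≤ n →
      (φ (a ^ n)).re ^ ((1 : ℝ) / (2 * n)) ≤ ‖x‖ := by
    intro n hn
    have h1 : a ^ n ≤ algebraMap ℝ A ‖a ^ n‖ :=
      IsSelfAdjoint.le_algebraMap_norm_self (hsa.pow n)
    have h2 : (φ (a ^ n)).re ≤ ‖a‖ ^ n := by
      have := hmono _ _ h1
      rw [hφ_alg, Complex.ofReal_re] at this
      exact this.trans (norm_pow_le' a hn)
    have h3 : (φ (a ^ n)).re ^ ((1 : ℝ) / (2 * n)) ≤ (‖a‖ ^ n) ^ ((1 : ℝ) / (2 * n)) :=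
      Real.rpow_le_rpow (hre_nonneg n) h2 (by positivity)
    refine h3.trans_eq ?_
    rw [hnorm, ← pow_mul, ← Real.rpow_natCast ‖x‖ (2 * n), ← Real.rpow_mul (norm_nonneg x)]
    have hn' : (n : ℝ) ≠ 0 := Nat.cast_ne_zero.mpr (by omega)
    rw [show ((2 * n : ℕ) : ℝ) * ((1 : ℝ) / (2 * n)) = 1 by push_cast; field_simp]
    exact Real.rpow_one _
  by_cases hx0 : x = 0
  · subst hx0
    rw [show ‖(0 : A)‖ = 0 from norm_zero]
    apply Tendsto.congr' (f₁ := fun _ : ℕ => (0 : ℝ))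
    · filter_upwards [eventually_ge_atTop 1] with n hn
      have hn' : (n : ℝ) ≠ 0 := Nat.cast_ne_zero.mpr (by omega)
      have ha0 : a = 0 := by simp [ha_def]
      rw [ha0, zero_pow (by omega : n ≠ 0), map_zero,
        Complex.zero_re, Real.zero_rpow (by positivity)]
    · exact tendsto_const_nhds
  · haveI : Nontrivial A := ⟨⟨x, 0, hx0⟩⟩
    have hxpos : 0 < ‖x‖ := norm_pos_iff.mpr hx0
    have hapos : 0 < ‖a‖ := by rw [hnorm]; positivity
    rw [tendsto_order]
    constructor
    · -- lower bound
      intro b hb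
      set m : ℝ := max b 0 with hm_def
      have hm0 : 0 ≤ m := le_max_right _ _
      have hmlt : m < ‖x‖ := max_lt hb hxpos
      have hm2 : m ^ 2 < ‖a‖ := by
        rw [hnorm]; exact pow_lt_pow_left₀ hmlt hm0 (by norm_num)
      set θ : ℝ := (m ^ 2 + ‖a‖) / 2 with hθ_def
      have hθ0 : 0 ≤ θ := by positivity
      have hθlt : θ < ‖a‖ := by rw [hθ_def]; linarith
      have hmθ : m ^ 2 < θ := by rw [hθ_def]; linarith
      have hden : 0 < ‖a‖ - θ := by linarith
      set g : ℝ → ℝ := fun t => max 0 (min 1 ((t - θ) / (‖a‖ - θ))) with hg_def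
      have hgc : Continuous g := by
        apply continuous_const.max
        exact continuous_const.min ((continuous_id.sub continuous_const).div_const _)
      have hg01 : ∀ t, 0 ≤ g t ∧ g t ≤ 1 := fun t =>
        ⟨le_max_left _ _, max_le zero_le_one (min_le_left _ _)⟩
      set b' : A := cfc g a with hb'_def
      have hb'0 : 0 ≤ b' := cfc_nonneg fun t _ => (hg01 t).1
      have hb'ne : b' ≠ 0 := by
        intro h
        have hmem : ‖a‖ ∈ spectrum ℝ a := CStarAlgebra.norm_mem_spectrum_of_nonneg ha
        have h1 : ‖g ‖a‖‖ ≤ ‖b'‖ :=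
          norm_apply_le_norm_cfc g a hmem hgc.continuousOn hsa
        have h2 : g ‖a‖ = 1 := by
          rw [hg_def]
          simp only [div_self hden.ne']
          norm_num
        rw [h, norm_zero, h2, norm_one] at h1
        linarith
      have hc : 0 < (φ b').re := by
        have h0 := hpos _ hb'0
        have hne : φ b' ≠ 0 := by
          intro h
          apply hb'ne
          have hs : star (CFC.sqrt b') * CFC.sqrt b' = b' := by
            rw [(IsSelfAdjoint.of_nonneg (CFC.sqrt_nonneg _)).star_eq,
              CFC.sqrt_mul_sqrt_self b' hb'0]
          have := hfaithful (CFC.sqrt b') (by rw [hs, h])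
          rw [← hs, this, mul_zero]
        rcases (Complex.le_def.mp h0).1.lt_or_eq with h | h
        · exact h
        · exfalso
          apply hne
          have him := (Complex.le_def.mp h0).2
          exact Complex.ext (by simp [← h]) (by simp [← him])
      set c : ℝ := (φ b').re with hc_def
      have key : ∀ n : ℕ, θ ^ n * c ≤ (φ (a ^ n)).re := by
        intro n
        have hle : (θ ^ n : ℝ) • b' ≤ a ^ n := by
          have h1 : cfc (fun t => (θ ^ n : ℝ) • g t) a ≤ cfc (fun t : ℝ => t ^ n) a := by
            apply cfc_mono
            · intro t ht
              have ht0 : 0 ≤ t := spectrum_nonneg_of_nonneg ha ht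
              rcases le_or_gt θ t with h | h
              · calc (θ ^ n : ℝ) • g t = θ ^ n * g t := rfl
                  _ ≤ θ ^ n * 1 := by
                      exact mul_le_mul_of_nonneg_left (hg01 t).2 (by positivity)
                  _ = θ ^ n := mul_one _
                  _ ≤ t ^ n := pow_le_pow_left₀ hθ0 h n
              · have hgt : g t = 0 := by
                  rw [hg_def]
                  have : (t - θ) / (‖a‖ - θ) ≤ 0 :=
                    div_nonpos_of_nonpos_of_nonneg (by linarith) hden.le
                  simp only [max_eq_left_iff]
                  exact (min_le_right _ _).trans this
                rw [smul_eq_mul, hgt, mul_zero]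
                positivity
            · exact ((continuous_const (y := (θ ^ n : ℝ))).smul hgc).continuousOn
            · exact (continuous_pow n).continuousOn
          rwa [cfc_smul (θ ^ n : ℝ) g a hgc.continuousOn, cfc_pow_id a n hsa] at h1
        have h2 := hmono _ _ hle
        rw [hsmul, Complex.re_ofReal_mul] at h2
        exact h2
      -- the auxiliary lower sequence tends to √θ > b
      have hsqrt : b < θ ^ ((1 : ℝ) / 2) := by
        rw [← Real.sqrt_eq_rpow]
        calc b ≤ m := le_max_left _ _
          _ < Real.sqrt θ := (Real.lt_sqrt hm0).mpr hmθ
      have htend : Tendsto (fun n : ℕ => θ ^ ((1 : ℝ) / 2) * c ^ ((1 : ℝ) / (2 * n)))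
          atTop (nhds (θ ^ ((1 : ℝ) / 2))) := by
        have hexp : Tendsto (fun n : ℕ => (1 : ℝ) / (2 * n)) atTop (nhds 0) :=
          tendsto_const_nhds.div_atTop
            ((tendsto_natCast_atTop_atTop (R := ℝ)).const_mul_atTop two_pos)
        have hcont : ContinuousAt (fun y : ℝ => c ^ y) 0 :=
          Real.continuousAt_const_rpow hc.ne'
        have h3 : Tendsto (fun n : ℕ => c ^ ((1 : ℝ) / (2 * n))) atTop (nhds 1) := by
          have := hcont.tendsto.comp hexp
          rwa [Real.rpow_zero] at this
        have h4 := (tendsto_const_nhds (x := θ ^ ((1 : ℝ) / 2)) (f := atTop (α := ℕ))).mul h3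
        rwa [mul_one] at h4
      filter_upwards [htend.eventually (lt_mem_nhds hsqrt), eventually_ge_atTop 1]
        with n hn1 hn2
      have hn' : (n : ℝ) ≠ 0 := Nat.cast_ne_zero.mpr (by omega)
      have heq : θ ^ ((1 : ℝ) / 2) * c ^ ((1 : ℝ) / (2 * n))
          = (θ ^ n * c) ^ ((1 : ℝ) / (2 * n)) := by
        have hee : (n : ℝ) * ((1 : ℝ) / (2 * n)) = 1 / 2 := by
          field_simp
        rw [Real.mul_rpow (by positivity) hc.le, ← Real.rpow_natCast θ n,
          ← Real.rpow_mul hθ0, hee]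
      calc b < θ ^ ((1 : ℝ) / 2) * c ^ ((1 : ℝ) / (2 * n)) := hn1
        _ = (θ ^ n * c) ^ ((1 : ℝ) / (2 * n)) := heq
        _ ≤ (φ (a ^ n)).re ^ ((1 : ℝ) / (2 * n)) :=
            Real.rpow_le_rpow (by positivity) (key n) (by positivity)
    · intro b hb
      filter_upwards [eventually_ge_atTop 1] with n hn
      exact lt_of_le_of_lt (hupper n hn) hb
end

section
/- For each n ∈ ℕ let A_n be a unital C*-algebra with a state φ_n and let x_n ∈ A_n; let A be a unital C*-algebra with a state φ and let x ∈ A. Assume: (a) for every k ∈ ℕ, φ_n((x_n* x_n)^k) → φ((x* x)^k) as n → ∞; (b) there exist constants C > 0 and D ≥ 0 such that for every n ∈ ℕ and every k ≥ 1, ‖x_n‖^{2k} ≤ C · k^D · (φ_n((x_n* x_n)^{2k}))^{1/2}. Then limsup_{n→∞} ‖x_n‖ ≤ ‖x‖. -/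
open Filter ComplexOrder

/-!  Auxiliary lemmas -/

section Aux
variable {B : Type*} [CStarAlgebra B] [PartialOrder B] [StarOrderedRing B]

lemma state_nonneg_aux (ψ : B →ₗ[ℂ] ℂ) (hψ : ψ 1 = 1 ∧ ∀ x : B, 0 ≤ ψ (star x * x))
    {a : B} (ha : 0 ≤ a) : 0 ≤ ψ a := by
  have h : a = star (CFC.sqrt a) * CFC.sqrt a := by
    rw [(IsSelfAdjoint.of_nonneg (CFC.sqrt_nonneg (a := a))).star_eq,
      CFC.sqrt_mul_sqrt_self a ha]
  rw [h]; exact hψ.2 _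

lemma state_re_le_norm_aux (ψ : B →ₗ[ℂ] ℂ) (hψ : ψ 1 = 1 ∧ ∀ x : B, 0 ≤ ψ (star x * x))
    {a : B} (ha : 0 ≤ a) : (ψ a).re ≤ ‖a‖ := by
  have hle : a ≤ algebraMap ℝ B ‖a‖ :=
    IsSelfAdjoint.le_algebraMap_norm_self (IsSelfAdjoint.of_nonneg ha)
  have h1 : 0 ≤ ψ (algebraMap ℝ B ‖a‖ - a) :=
    state_nonneg_aux ψ hψ (sub_nonneg.2 hle)
  have h2 : ψ (algebraMap ℝ B ‖a‖) = (‖a‖ : ℂ) := by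
    rw [Algebra.algebraMap_eq_smul_one, LinearMap.map_smul_of_tower, hψ.1]
    simp [Complex.real_smul]
  rw [map_sub, h2] at h1
  have := (Complex.le_def.mp h1).1
  simp at this
  linarith

end Aux

/-- the RD prefactor tends to 1 -/
lemma rd_factor_tendsto (C D : ℝ) (hC : 0 < C) :
    Tendsto (fun k : ℕ => (C * (k : ℝ) ^ D) ^ ((2 * (k : ℝ))⁻¹)) atTop (nhds 1) := by
  have h : (fun k : ℕ => (C * (k : ℝ) ^ D) ^ ((2 * (k : ℝ))⁻¹))
      =ᶠ[atTop] fun k : ℕ => Real.exp ((2 * (k : ℝ))⁻¹ * (Real.log C + D * Real.log k)) := by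
    filter_upwards [eventually_ge_atTop 1] with k hk
    have hk0 : (0 : ℝ) < k := by exact_mod_cast hk
    rw [Real.rpow_def_of_pos (by positivity), Real.log_mul (ne_of_gt hC) (by positivity),
      Real.log_rpow hk0, mul_comm ((2 * (k : ℝ))⁻¹)]
  rw [show (1 : ℝ) = Real.exp 0 by simp]
  refine Tendsto.congr' h.symm (Real.continuous_exp.continuousAt.tendsto.comp ?_)
  have h1 : Tendsto (fun k : ℕ => Real.log C / (2 * (k : ℝ))) atTop (nhds 0) := by
    apply Tendsto.div_atTop tendsto_const_nhds
    exact Tendsto.const_mul_atTop two_pos tendsto_natCast_atTop_atTop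
  have h2 : Tendsto (fun k : ℕ => D * (Real.log k / k) / 2) atTop (nhds 0) := by
    have := Real.isLittleO_log_id_atTop.tendsto_div_nhds_zero.comp
      tendsto_natCast_atTop_atTop
    simpa using (this.const_mul D).div_const 2
  have := h1.add h2
  simp only [add_zero] at this
  refine this.congr' ?_
  filter_upwards [eventually_ge_atTop 1] with k hk
  have hk0 : (0 : ℝ) < k := by exact_mod_cast hk
  field_simp

/-- Convergence of moments together with a uniform RD-type bound for the elements `x_n`
implies `limsup ‖x_n‖ ≤ ‖x‖`. -/
theorem limsup_norm_le_of_moment_convergence_and_RD_bound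
    (A : ℕ → Type*) [∀ n, CStarAlgebra (A n)]
    (B : Type*) [CStarAlgebra B]
    (φ : ∀ n, A n →ₗ[ℂ] ℂ) (ψ : B →ₗ[ℂ] ℂ)
    (hφ : ∀ n, IsState (φ n)) (hψ : IsState ψ)
    (x : ∀ n, A n) (y : B)
    (hconv : ∀ k : ℕ,
      Tendsto (fun n => φ n ((star (x n) * x n) ^ k)) atTop
        (nhds (ψ ((star y * y) ^ k))))
    (hRD : ∃ C D : ℝ, 0 < C ∧ 0 ≤ D ∧ ∀ n : ℕ, ∀ k : ℕ, 1 ≤ k →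
      ‖x n‖ ^ (2 * k) ≤
        C * (k : ℝ) ^ D * Real.sqrt ((φ n ((star (x n) * x n) ^ (2 * k))).re)) :
    limsup (fun n => ‖x n‖) atTop ≤ ‖y‖ := by
  classical
  letI : PartialOrder B := CStarAlgebra.spectralOrder B
  haveI : StarOrderedRing B := CStarAlgebra.spectralOrderedRing B
  obtain ⟨C, D, hC, hD, hRD⟩ := hRD
  -- the limiting moment
  set m : ℕ → ℝ := fun k => (ψ ((star y * y) ^ k)).re with hm
  have hm_nonneg : ∀ k, 0 ≤ m k := fun k => by
    have h0 : (0 : B) ≤ (star y * y) ^ k := CStarAlgebra.pow_nonneg (star_mul_self_nonneg y) k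
    have := state_nonneg_aux ψ hψ h0
    exact (Complex.le_def.mp this).1
  have hm_le : ∀ k : ℕ, 1 ≤ k → Real.sqrt (m (2 * k)) ≤ ‖y‖ ^ (2 * k) := by
    intro k hk
    have h0 : (0 : B) ≤ (star y * y) ^ (2 * k) := CStarAlgebra.pow_nonneg (star_mul_self_nonneg y) _
    have h1 : m (2 * k) ≤ ‖(star y * y) ^ (2 * k)‖ := state_re_le_norm_aux ψ hψ h0
    have h2 : ‖(star y * y) ^ (2 * k)‖ ≤ (‖y‖ ^ (2 * k)) ^ 2 := by
      calc ‖(star y * y) ^ (2 * k)‖ ≤ ‖star y * y‖ ^ (2 * k) := norm_pow_le' _ (by omega)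
        _ = (‖y‖ * ‖y‖) ^ (2 * k) := by rw [CStarRing.norm_star_mul_self]
        _ = (‖y‖ ^ (2 * k)) ^ 2 := by ring
    calc Real.sqrt (m (2 * k)) ≤ Real.sqrt ((‖y‖ ^ (2 * k)) ^ 2) :=
          Real.sqrt_le_sqrt (h1.trans h2)
      _ = ‖y‖ ^ (2 * k) := Real.sqrt_sq (by positivity)
  -- key bound for each k ≥ 1
  have key : ∀ k : ℕ, 1 ≤ k →
      limsup (fun n => ‖x n‖) atTop ≤ (C * (k : ℝ) ^ D) ^ ((2 * (k : ℝ))⁻¹) * ‖y‖ := by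
    intro k hk
    have hk0 : (0 : ℝ) < (2 * k : ℕ) := by positivity
    set g : ℕ → ℝ := fun n =>
      (C * (k : ℝ) ^ D * Real.sqrt ((φ n ((star (x n) * x n) ^ (2 * k))).re))
        ^ (((2 * k : ℕ) : ℝ)⁻¹) with hg
    have hbound : ∀ n, ‖x n‖ ≤ g n := by
      intro n
      have h1 := hRD n k hk
      have h2 : (0 : ℝ) ≤ ‖x n‖ := norm_nonneg _
      calc ‖x n‖ = (‖x n‖ ^ (2 * k)) ^ (((2 * k : ℕ) : ℝ)⁻¹) :=
            (Real.pow_rpow_inv_natCast h2 (by omega)).symm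
        _ ≤ g n := Real.rpow_le_rpow (by positivity) h1 (by positivity)
    -- g converges
    have hgconv : Tendsto g atTop
        (nhds ((C * (k : ℝ) ^ D * Real.sqrt (m (2 * k))) ^ (((2 * k : ℕ) : ℝ)⁻¹))) := by
      have h1 : Tendsto (fun n => (φ n ((star (x n) * x n) ^ (2 * k))).re) atTop
          (nhds (m (2 * k))) :=
        (Complex.continuous_re.tendsto _).comp (hconv (2 * k))
      have h2 : Tendsto (fun n =>
          C * (k : ℝ) ^ D * Real.sqrt ((φ n ((star (x n) * x n) ^ (2 * k))).re)) atTop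
          (nhds (C * (k : ℝ) ^ D * Real.sqrt (m (2 * k)))) :=
        (tendsto_const_nhds.mul ((Real.continuous_sqrt.tendsto _).comp h1))
      exact ((Real.continuousAt_rpow_const _ _ (Or.inr (by positivity))).tendsto).comp h2
    have hlim : limsup (fun n => ‖x n‖) atTop ≤
        (C * (k : ℝ) ^ D * Real.sqrt (m (2 * k))) ^ (((2 * k : ℕ) : ℝ)⁻¹) := by
      have h1 : limsup (fun n => ‖x n‖) atTop ≤ limsup g atTop := by
        exact limsup_le_limsup (Eventually.of_forall hbound)
          (hu := (isBoundedUnder_of ⟨0, fun n => norm_nonneg _⟩ :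
            IsBoundedUnder (· ≥ ·) atTop fun n => ‖x n‖).isCoboundedUnder_le)
          (hv := hgconv.isBoundedUnder_le)
      rwa [hgconv.limsup_eq] at h1
    refine hlim.trans ?_
    have h3 : C * (k : ℝ) ^ D * Real.sqrt (m (2 * k))
        ≤ C * (k : ℝ) ^ D * ‖y‖ ^ (2 * k) := by
      exact mul_le_mul_of_nonneg_left (hm_le k hk) (by positivity)
    calc (C * (k : ℝ) ^ D * Real.sqrt (m (2 * k))) ^ (((2 * k : ℕ) : ℝ)⁻¹)
        ≤ (C * (k : ℝ) ^ D * ‖y‖ ^ (2 * k)) ^ (((2 * k : ℕ) : ℝ)⁻¹) :=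
          Real.rpow_le_rpow (by positivity) h3 (by positivity)
      _ = (C * (k : ℝ) ^ D) ^ (((2 * k : ℕ) : ℝ)⁻¹) * (‖y‖ ^ (2 * k)) ^ (((2 * k : ℕ) : ℝ)⁻¹) :=
          Real.mul_rpow (by positivity) (by positivity)
      _ = (C * (k : ℝ) ^ D) ^ ((2 * (k : ℝ))⁻¹) * ‖y‖ := by
          rw [Real.pow_rpow_inv_natCast (norm_nonneg y) (by omega)]
          norm_num
  -- conclude
  have hfac := (rd_factor_tendsto C D hC).mul_const ‖y‖
  rw [one_mul] at hfac
  refine ge_of_tendsto hfac ?_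
  filter_upwards [eventually_ge_atTop 1] with k hk
  exact key k hk
end
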